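/- Let P and Q be probability measures on a measurable space (Θ, F) with Q absolutely continuous with respect to P, and let h be a real-valued measurable function with exp(h) integrable with respect to P. Then E_Q[h] − KL(Q‖P) ≤ log E_P[exp h]. -/

import Mathlib

open MeasureTheory Real

/-- Donsker–Varadhan upper bound: for probability measures `Q ≪ P` and a measurable `h`
with `exp h ∈ L¹(P)`, we have `E_Q[h] − KL(Q‖P) ≤ log E_P[exp h]`. -/
theorem duality_upper_bound {Θ : Type*} [MeasurableSpace Θ]
    (P Q : Measure Θ) [IsProbabilityMeasure P] [IsProbabilityMeasure Q]
    (hQP : Q ≪ P) (h : Θ → ℝ) (hm : Measurable h)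
    (hexp : Integrable (fun θ => Real.exp (h θ)) P)
    (hhQ : Integrable h Q)
    (hKL : Integrable (fun θ => Real.log (Q.rnDeriv P θ).toReal) Q) :
    (∫ θ, h θ ∂Q) - ∫ θ, Real.log (Q.rnDeriv P θ).toReal ∂Q
      ≤ Real.log (∫ θ, Real.exp (h θ) ∂P) := by
  set Z : ℝ := ∫ θ, Real.exp (h θ) ∂P with hZdef
  have hZpos : 0 < Z := integral_exp_pos hexp
  set f : Θ → ℝ := fun θ => (Q.rnDeriv P θ).toReal with hfdef
  have hfmeas : Measurable f := (Measure.measurable_rnDeriv Q P).ennreal_toReal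
  -- g is the "tilted" ratio
  set g : Θ → ℝ := fun θ => Real.exp (h θ) / (f θ * Z) with hgdef
  have hgmeas : Measurable g := ((measurable_exp.comp hm).div
    (hfmeas.mul measurable_const))
  have hgnn : ∀ θ, 0 ≤ g θ := fun θ =>
    div_nonneg (Real.exp_nonneg _) (mul_nonneg ENNReal.toReal_nonneg hZpos.le)
  -- positivity of rnDeriv Q-a.e.
  have hfin : ∀ᵐ θ ∂Q, Q.rnDeriv P θ < ⊤ := hQP.ae_le (Measure.rnDeriv_lt_top Q P)
  have hpos : ∀ᵐ θ ∂Q, 0 < f θ := by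
    filter_upwards [Measure.rnDeriv_pos hQP, hfin] with θ h1 h2
    exact ENNReal.toReal_pos h1.ne' h2.ne
  -- lintegral bound : ∫⁻ g dQ ≤ 1
  have hlint : ∫⁻ θ, ENNReal.ofReal (g θ) ∂Q ≤ 1 := by
    rw [← MeasureTheory.lintegral_rnDeriv_mul hQP
      (hgmeas.ennreal_ofReal.aemeasurable)]
    have hPfin : ∀ᵐ θ ∂P, Q.rnDeriv P θ < ⊤ := Measure.rnDeriv_lt_top Q P
    have hle : ∀ᵐ θ ∂P, Q.rnDeriv P θ * ENNReal.ofReal (g θ)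
        ≤ ENNReal.ofReal (Real.exp (h θ) / Z) := by
      filter_upwards [hPfin] with θ hlt
      rcases eq_or_ne (Q.rnDeriv P θ) 0 with h0 | h0
      · simp [h0]
      · have hfθ : 0 < f θ := ENNReal.toReal_pos h0 hlt.ne
        have : Q.rnDeriv P θ = ENNReal.ofReal (f θ) := by
          rw [hfdef, ENNReal.ofReal_toReal hlt.ne]
        rw [this, ← ENNReal.ofReal_mul ENNReal.toReal_nonneg]
        apply ENNReal.ofReal_le_ofReal
        have heq : f θ * g θ = Real.exp (h θ) / Z := by
          rw [hgdef]
          field_simp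
        exact heq.le
    calc ∫⁻ θ, Q.rnDeriv P θ * ENNReal.ofReal (g θ) ∂P
        ≤ ∫⁻ θ, ENNReal.ofReal (Real.exp (h θ) / Z) ∂P := lintegral_mono_ae hle
      _ = ∫⁻ θ, ENNReal.ofReal (Real.exp (h θ)) * ENNReal.ofReal Z⁻¹ ∂P := by
          congr 1; ext θ
          rw [div_eq_mul_inv, ENNReal.ofReal_mul (Real.exp_nonneg _)]
      _ = (∫⁻ θ, ENNReal.ofReal (Real.exp (h θ)) ∂P) * ENNReal.ofReal Z⁻¹ :=
          lintegral_mul_const'' _ (hm.exp.ennreal_ofReal.aemeasurable)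
      _ = ENNReal.ofReal Z * ENNReal.ofReal Z⁻¹ := by
          rw [← ofReal_integral_eq_lintegral_ofReal hexp
            (Filter.Eventually.of_forall fun θ => Real.exp_nonneg _)]
      _ = 1 := by
          rw [← ENNReal.ofReal_mul hZpos.le, mul_inv_cancel₀ hZpos.ne']
          simp
  -- g is integrable with ∫ g dQ ≤ 1
  have hgint : Integrable g Q := by
    refine ⟨hgmeas.aestronglyMeasurable, ?_⟩
    rw [hasFiniteIntegral_iff_ofReal (Filter.Eventually.of_forall hgnn)]
    exact lt_of_le_of_lt hlint ENNReal.one_lt_top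
  have hgle : ∫ θ, g θ ∂Q ≤ 1 := by
    rw [integral_eq_lintegral_of_nonneg_ae (Filter.Eventually.of_forall hgnn)
      hgmeas.aestronglyMeasurable]
    have := ENNReal.toReal_mono ENNReal.one_ne_top hlint
    simpa using this
  -- pointwise inequality
  have hpt : ∀ᵐ θ ∂Q, h θ - Real.log (f θ) - Real.log Z ≤ g θ - 1 := by
    filter_upwards [hpos] with θ hfθ
    have hgpos : 0 < g θ :=
      div_pos (Real.exp_pos _) (mul_pos hfθ hZpos)
    have : Real.log (g θ) = h θ - Real.log (f θ) - Real.log Z := by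
      rw [hgdef]
      rw [Real.log_div (Real.exp_ne_zero _) (mul_pos hfθ hZpos).ne',
        Real.log_exp, Real.log_mul hfθ.ne' hZpos.ne']
      ring
    rw [← this]
    exact Real.log_le_sub_one_of_pos hgpos
  -- put it together
  have hint1 : Integrable (fun θ => h θ - Real.log (f θ)) Q := hhQ.sub hKL
  have key : ∫ θ, (h θ - Real.log (f θ) - Real.log Z) ∂Q ≤ ∫ θ, (g θ - 1) ∂Q :=
    integral_mono_ae (hint1.sub (integrable_const _))
      (hgint.sub (integrable_const _)) hpt
  rw [integral_sub hint1 (integrable_const _), integral_sub hhQ hKL,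
    integral_sub hgint (integrable_const _), integral_const] at key
  have hone : ∫ (_ : Θ), (1:ℝ) ∂Q = 1 := by simp
  rw [hone] at key
  simp only [measure_univ, ENNReal.toReal_one, one_smul, probReal_univ] at key
  linarith
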